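/- Let (X,G) be a small Polish structure and H a countable group. Then for every n < ω there are only countably many orbits on H(X)ⁿ under the diagonal action of G; that is, (H(X),G) is small. -/

import Mathlib

open Function

variable (X H : Type*)

/-- `H(X)`: the direct sum of copies of `H` indexed by `X`, realized as the subgroup of
the product group `X → H` consisting of finitely supported functions. -/
def FinSupp [Group H] : Subgroup (X → H) where
  carrier := {f | (Function.mulSupport f).Finite}
  one_mem' := by simp [Function.mulSupport_one]
  mul_mem' {f g} hf hg := (hf.union hg).subset (Function.mulSupport_mul f g)
  inv_mem' {f} hf := by simpa [Function.mulSupport_inv] using hf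

variable (G : Type*) [Group G] [Group H] [MulAction G X]

/-- The action of `G` on `H(X)` given by `(g • y) x = y (g⁻¹ • x)`. -/
instance : MulAction G ↥(FinSupp X H) where
  smul g y := ⟨fun x => (y : X → H) (g⁻¹ • x), by
    show (Function.mulSupport ((y : X → H) ∘ (fun x => g⁻¹ • x))).Finite
    rw [Function.mulSupport_comp_eq_preimage]
    exact y.2.preimage ((MulAction.injective (g⁻¹ : G)).injOn)⟩
  one_smul y := Subtype.ext <| funext fun x => by
    show (y : X → H) ((1 : G)⁻¹ • x) = (y : X → H) x
    rw [inv_one, one_smul]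
  mul_smul g₁ g₂ y := Subtype.ext <| funext fun x => by
    show (y : X → H) ((g₁ * g₂)⁻¹ • x) = (y : X → H) (g₂⁻¹ • g₁⁻¹ • x)
    rw [mul_inv_rev, mul_smul]

lemma smul_finSupp_apply (g : G) (y : ↥(FinSupp X H)) (x : X) :
    ((g • y : ↥(FinSupp X H)) : X → H) x = (y : X → H) (g⁻¹ • x) := rfl

/-- Let `(X,G)` be a small Polish structure and `H` a countable group.
Then for every `n < ω` there are only countably many orbits on `H(X)ⁿ` under the diagonal
action of `G`; that is, `(H(X),G)` is small. -/
theorem statement2 [TopologicalSpace G] [IsTopologicalGroup G] [PolishSpace G]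
    [FaithfulSMul G X] (hstab : ∀ x : X, IsClosed {g : G | g • x = x})
    (hsmall : ∀ n : ℕ, Countable (Quotient (MulAction.orbitRel G (Fin n → X))))
    [Countable H] :
    ∀ n : ℕ, Countable (Quotient (MulAction.orbitRel G (Fin n → ↥(FinSupp X H)))) := by
  intro n
  classical
  -- finiteness of supports for the construction below
  have hΦfin : ∀ (m : ℕ) (s : Fin m → X) (w : Fin m → H),
      (Function.mulSupport fun x =>
        (((List.finRange m).filter (fun j => decide (s j = x))).map w).prod).Finite := by
    intro m s w
    apply (Set.finite_range s).subset
    intro x hx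
    simp only [Function.mem_mulSupport] at hx
    by_contra hxr
    apply hx
    have hnil : ((List.finRange m).filter (fun j => decide (s j = x))) = [] := by
      simp only [List.filter_eq_nil_iff, decide_eq_true_eq]
      intro j _ hj
      exact hxr ⟨j, hj⟩
    simp [hnil]
  -- the map sending (support tuple, values) to a tuple in H(X)^n
  let Φ : (Σ m : ℕ, (Fin m → X) × (Fin n → Fin m → H)) → (Fin n → ↥(FinSupp X H)) :=
    fun p i => ⟨fun x =>
      (((List.finRange p.1).filter (fun j => decide (p.2.1 j = x))).map (p.2.2 i)).prod,
      hΦfin p.1 p.2.1 (p.2.2 i)⟩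
  -- Φ is equivariant in the support tuple
  have hequi : ∀ (m : ℕ) (g : G) (s : Fin m → X) (v : Fin n → Fin m → H),
      Φ ⟨m, g • s, v⟩ = g • Φ ⟨m, s, v⟩ := by
    intro m g s v
    funext i
    apply Subtype.ext
    funext x
    have h2 : ((g • Φ ⟨m, s, v⟩) i : X → H) x = ((Φ ⟨m, s, v⟩ i : ↥(FinSupp X H)) : X → H) (g⁻¹ • x) :=
      smul_finSupp_apply X H G g (Φ ⟨m, s, v⟩ i) x
    rw [h2]
    show (((List.finRange m).filter (fun j => decide ((g • s) j = x))).map (v i)).prod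
        = (((List.finRange m).filter (fun j => decide (s j = g⁻¹ • x))).map (v i)).prod
    have hfc : List.filter (fun j => decide ((g • s) j = x)) (List.finRange m)
        = List.filter (fun j => decide (s j = g⁻¹ • x)) (List.finRange m) := by
      apply List.filter_congr
      intro j _
      simp only [Pi.smul_apply, decide_eq_decide]
      exact smul_eq_iff_eq_inv_smul g
    rw [hfc]
  -- the induced map on quotients
  let F : (Σ m : ℕ, Quotient (MulAction.orbitRel G (Fin m → X)) × (Fin n → Fin m → H)) →
      Quotient (MulAction.orbitRel G (Fin n → ↥(FinSupp X H))) :=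
    fun p => Quotient.liftOn p.2.1 (fun s => ⟦Φ ⟨p.1, s, p.2.2⟩⟧) (by
      intro s s' hss'
      obtain ⟨g, hg⟩ := hss'
      apply Quotient.sound
      refine ⟨g, ?_⟩
      show g • Φ ⟨p.1, s', p.2.2⟩ = Φ ⟨p.1, s, p.2.2⟩
      rw [← hequi p.1 g s' p.2.2]
      have hg' : g • s' = s := hg
      rw [hg'])
  -- F is surjective
  have hsurj : Function.Surjective F := by
    intro q
    obtain ⟨y, rfl⟩ := Quotient.exists_rep q
    have hS : (⋃ i, Function.mulSupport fun x => (y i : X → H) x).Finite :=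
      Set.finite_iUnion fun i => (y i).2
    set T : Finset X := hS.toFinset with hT
    set m : ℕ := T.card with hm
    let e : Fin m ≃ {x // x ∈ T} := T.equivFin.symm
    let s : Fin m → X := fun j => (e j : X)
    have hsinj : Function.Injective s := fun a b hab =>
      e.injective (Subtype.ext hab)
    let v : Fin n → Fin m → H := fun i j => (y i : X → H) (s j)
    refine ⟨⟨m, ⟦s⟧, v⟩, ?_⟩
    show ⟦Φ ⟨m, s, v⟩⟧ = ⟦y⟧
    congr 1
    funext i
    apply Subtype.ext
    funext x
    show (((List.finRange m).filter (fun j => decide (s j = x))).map (v i)).prod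
        = (y i : X → H) x
    by_cases hx : ∃ j, s j = x
    · obtain ⟨j0, rfl⟩ := hx
      have hfil : (List.finRange m).filter (fun j => decide (s j = s j0)) = [j0] := by
        have : (List.finRange m).filter (fun j => decide (s j = s j0))
            = (List.finRange m).filter (fun j => decide (j = j0)) := by
          apply List.filter_congr
          intro j _
          simp only [decide_eq_decide]
          exact ⟨fun h => hsinj h, fun h => by rw [h]⟩
        rw [this, List.filter_eq,
          List.count_eq_one_of_mem (List.nodup_finRange m) (List.mem_finRange j0)]
        rfl
      simp [hfil, v]
    · have hnil : (List.finRange m).filter (fun j => decide (s j = x)) = [] := by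
        simp only [List.filter_eq_nil_iff, decide_eq_true_eq]
        intro j _ hj
        exact hx ⟨j, hj⟩
      rw [hnil]
      simp only [List.map_nil, List.prod_nil]
      by_contra hne
      have hxS : x ∈ T := by
        rw [hT, Set.Finite.mem_toFinset]
        exact Set.mem_iUnion.mpr ⟨i, fun h => hne h.symm⟩
      exact hx ⟨e.symm ⟨x, hxS⟩, by simp [s]⟩
  haveI : ∀ m : ℕ, Countable (Quotient (MulAction.orbitRel G (Fin m → X))) := hsmall
  exact hsurj.countable
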